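/- arXiv:1410.3785 — 3 statements merged into one kernel-verified Lean document; each statement's English description precedes it below -/
import Mathlib

section
/- Let D be a domain (nonempty connected open set) in ℂⁿ and let u : D → ℝ be a continuous plurisubharmonic function which is non-negative and maximal. Assume that the zero set u⁻¹(0) ⊆ D is non-empty and convex. Then every point x of u⁻¹(0) lies in the relative interior of a complex one-dimensional convex set contained in u⁻¹(0); i.e., there exists a convex set C ⊆ u⁻¹(0) whose affine hull over ℝ is a set of the form p + ℂ·v with v ≠ 0, such that x belongs to the relative interior of C. -/
open MeasureTheory

noncomputable section

/-- A (continuous) function `u` satisfies the circle sub-mean-value property on `D`: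
for continuous functions this characterizes plurisubharmonicity. -/
def IsPshOn {E : Type*} [NormedAddCommGroup E] [NormedSpace ℂ E]
    (D : Set E) (u : E → ℝ) : Prop :=
  ∀ (a b : E) (r : ℝ), 0 < r → (∀ c : ℂ, ‖c‖ ≤ r → a + c • b ∈ D) →
    u a ≤ (1 / (2 * Real.pi)) *
      ∫ θ in (0:ℝ)..(2 * Real.pi), u (a + ((r : ℂ) * Complex.exp ((θ : ℂ) * Complex.I)) • b)

/-- `u` is a maximal plurisubharmonic function on `D`. -/
def IsMaximalPshOn {E : Type*} [NormedAddCommGroup E] [NormedSpace ℂ E]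
    (D : Set E) (u : E → ℝ) : Prop :=
  ∀ G : Set E, IsOpen G → IsCompact (closure G) → closure G ⊆ D →
    ∀ v : E → ℝ, UpperSemicontinuousOn v (closure G) → IsPshOn G v →
      (∀ z ∈ frontier G, v z ≤ u z) → ∀ z ∈ G, v z ≤ u z


open Real

section
lemma re_mul_exp (w : ℂ) (θ : ℝ) :
    (w * Complex.exp (θ * Complex.I)).re = w.re * Real.cos θ - w.im * Real.sin θ := by
  simp [Complex.exp_mul_I, Complex.mul_re, Complex.add_re, Complex.add_im,
    ← Complex.ofReal_cos, ← Complex.ofReal_sin]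

lemma cont1 (w : ℂ) : Continuous fun θ : ℝ => (w * Complex.exp (θ * Complex.I)).re := by
  apply Complex.continuous_re.comp
  exact continuous_const.mul (Complex.continuous_exp.comp
    (Complex.continuous_ofReal.mul continuous_const))

lemma cont2 (w : ℂ) : Continuous fun θ : ℝ => (w * Complex.exp ((2*θ:ℝ) * Complex.I)).re := by
  apply Complex.continuous_re.comp
  exact continuous_const.mul (Complex.continuous_exp.comp
    ((Complex.continuous_ofReal.comp (continuous_const.mul continuous_id)).mul continuous_const))

lemma int_cos2 : ∫ θ in (0:ℝ)..(2*π), Real.cos (2*θ) = 0 := by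
  rw [intervalIntegral.integral_comp_mul_left Real.cos (two_ne_zero)]
  norm_num [integral_cos]
  rw [show (2:ℝ)*(2*π) = 2*π + 2*π by ring, Real.sin_add]
  simp [Real.sin_two_pi, Real.cos_two_pi]

lemma int_sin2 : ∫ θ in (0:ℝ)..(2*π), Real.sin (2*θ) = 0 := by
  rw [intervalIntegral.integral_comp_mul_left Real.sin (two_ne_zero)]
  norm_num [integral_sin]
  rw [show (2:ℝ)*(2*π) = 2*π + 2*π by ring, Real.cos_add]
  simp [Real.sin_two_pi, Real.cos_two_pi]

lemma int1 (w : ℂ) : ∫ θ in (0:ℝ)..(2*π), (w * Complex.exp (θ * Complex.I)).re = 0 := by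
  simp only [re_mul_exp]
  rw [intervalIntegral.integral_sub, intervalIntegral.integral_const_mul,
    intervalIntegral.integral_const_mul]
  · simp [integral_cos, integral_sin, Real.sin_two_pi, Real.cos_two_pi]
  · exact (continuous_const.mul Real.continuous_cos).intervalIntegrable _ _
  · exact (continuous_const.mul Real.continuous_sin).intervalIntegrable _ _

lemma int2 (w : ℂ) : ∫ θ in (0:ℝ)..(2*π), (w * Complex.exp ((2*θ:ℝ) * Complex.I)).re = 0 := by
  simp only [re_mul_exp]
  rw [intervalIntegral.integral_sub, intervalIntegral.integral_const_mul,
    intervalIntegral.integral_const_mul, int_cos2, int_sin2]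
  · ring
  · exact (continuous_const.mul (Real.continuous_cos.comp (continuous_const.mul continuous_id))).intervalIntegrable _ _
  · exact (continuous_const.mul (Real.continuous_sin.comp (continuous_const.mul continuous_id))).intervalIntegrable _ _
end

def Lin1 {V : Type*} [NormedAddCommGroup V] [NormedSpace ℂ V] (f : V → ℂ) : Prop :=
  Continuous f ∧ ∀ (a b : V) (c : ℂ), f (a + c • b) = f a + c * f b

def Deg2 {V : Type*} [NormedAddCommGroup V] [NormedSpace ℂ V] (F : V → ℂ) : Prop :=
  Continuous F ∧ ∀ a b : V, ∃ γ₁ γ₂ : ℂ, ∀ c : ℂ,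
    F (a + c • b) = F a + γ₁ * c + γ₂ * c ^ 2

section Deg2Lemmas
variable {V : Type*} [NormedAddCommGroup V] [NormedSpace ℂ V]

lemma Deg2.add {F G : V → ℂ} (hF : Deg2 F) (hG : Deg2 G) : Deg2 (fun z => F z + G z) := by
  refine ⟨hF.1.add hG.1, fun a b => ?_⟩
  obtain ⟨γ₁, γ₂, h₁⟩ := hF.2 a b
  obtain ⟨δ₁, δ₂, h₂⟩ := hG.2 a b
  exact ⟨γ₁ + δ₁, γ₂ + δ₂, fun c => by simp only [h₁, h₂]; ring⟩


lemma Deg2.const_mul {F : V → ℂ} (hF : Deg2 F) (t : ℂ) : Deg2 (fun z => t * F z) := by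
  refine ⟨continuous_const.mul hF.1, fun a b => ?_⟩
  obtain ⟨γ₁, γ₂, h₁⟩ := hF.2 a b
  exact ⟨t * γ₁, t * γ₂, fun c => by simp only [h₁]; ring⟩


lemma Lin1.deg2_quad {f : V → ℂ} (hf : Lin1 f) (α β : ℂ) :
    Deg2 (fun z => α * f z + β * (f z * f z)) := by
  refine ⟨(continuous_const.mul hf.1).add (continuous_const.mul (hf.1.mul hf.1)), fun a b => ?_⟩
  refine ⟨α * f b + β * (2 * (f a * f b)), β * (f b * f b), fun c => ?_⟩
  simp only [hf.2 a b c]; ring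


lemma deg2_sum {ι : Type*} (s : Finset ι) (F : ι → V → ℂ) (h : ∀ i ∈ s, Deg2 (F i)) :
    Deg2 (fun z => ∑ i ∈ s, F i z) := by
  classical
  induction s using Finset.induction with
  | empty => exact ⟨continuous_const, fun a b => ⟨0, 0, fun c => by simp⟩⟩
  | insert j s' hni ih =>
    simp only [Finset.sum_insert hni]
    exact (h j (Finset.mem_insert_self j s')).add (ih fun i hi => h i (Finset.mem_insert_of_mem hi))


lemma deg2_integral {F : V → ℂ} (hF : Deg2 F) (a b : V) (r : ℝ) :
    ∫ θ in (0:ℝ)..(2*π), (F (a + ((r:ℂ) * Complex.exp (θ * Complex.I)) • b)).re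
      = 2 * π * (F a).re := by
  obtain ⟨γ₁, γ₂, h⟩ := hF.2 a b
  have key : ∀ θ : ℝ, (F (a + ((r:ℂ) * Complex.exp (θ * Complex.I)) • b)).re
      = (F a).re + (((γ₁ * r) * Complex.exp (θ * Complex.I)).re
        + ((γ₂ * r ^ 2) * Complex.exp ((2*θ:ℝ) * Complex.I)).re) := by
    intro θ
    rw [h ((r:ℂ) * Complex.exp (θ * Complex.I))]
    have hexp : (Complex.exp (θ * Complex.I)) ^ 2 = Complex.exp ((2*θ:ℝ) * Complex.I) := by
      rw [← Complex.exp_nat_mul]; push_cast; ring_nf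
    have h2 : ((r:ℂ) * Complex.exp (θ * Complex.I)) ^ 2
        = (r:ℂ)^2 * Complex.exp ((2*θ:ℝ) * Complex.I) := by
      rw [mul_pow, hexp]
    rw [h2]
    simp only [Complex.add_re]
    ring_nf
  simp only [key]
  rw [intervalIntegral.integral_add (intervalIntegrable_const)
      (by exact ((cont1 (γ₁ * r)).add (cont2 (γ₂ * r^2))).intervalIntegrable _ _),
    intervalIntegral.integral_add ((cont1 (γ₁ * r)).intervalIntegrable _ _)
      ((cont2 (γ₂ * r^2)).intervalIntegrable _ _),
    int1, int2]
  simp [mul_comm]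


lemma deg2_psh {F : V → ℂ} (hF : Deg2 F) (x : V) (t ε : ℝ) (G : Set V) :
    IsPshOn G (fun z => t * ((F (z - x)).re + ε)) := by
  intro a b r hr _
  have hrw : ∀ θ : ℝ, (fun z => t * ((F (z - x)).re + ε))
        (a + ((r:ℂ) * Complex.exp (θ * Complex.I)) • b)
      = t * (F ((a - x) + ((r:ℂ) * Complex.exp (θ * Complex.I)) • b)).re + t * ε := by
    intro θ
    have : a + ((r:ℂ) * Complex.exp (θ * Complex.I)) • b - x
        = (a - x) + ((r:ℂ) * Complex.exp (θ * Complex.I)) • b := by abel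
    show t * ((F (a + ((r:ℂ) * Complex.exp (θ * Complex.I)) • b - x)).re + ε) = _
    rw [this]; ring
  have hcont : Continuous fun θ : ℝ =>
      t * (F ((a - x) + ((r:ℂ) * Complex.exp (θ * Complex.I)) • b)).re := by
    apply continuous_const.mul
    apply Complex.continuous_re.comp
    apply hF.1.comp
    exact continuous_const.add ((continuous_const.mul (Complex.continuous_exp.comp
      (Complex.continuous_ofReal.mul continuous_const))).smul continuous_const)
  simp only [hrw]
  rw [intervalIntegral.integral_add (hcont.intervalIntegrable _ _) intervalIntegrable_const]
  have h1 : ∫ θ in (0:ℝ)..(2*π),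
      t * (F ((a - x) + ((r:ℂ) * Complex.exp (θ * Complex.I)) • b)).re
      = t * (2 * π * (F (a - x)).re) := by
    rw [intervalIntegral.integral_const_mul, deg2_integral hF]
  rw [h1]
  simp only [intervalIntegral.integral_const, smul_eq_mul, sub_zero]
  have hπ : (2 * π) ≠ 0 := by positivity
  apply le_of_eq
  field_simp

lemma coesmul (s : ℝ) (v : V) : ((s : ℂ)) • v = s • v := by
  rw [← IsScalarTower.algebraMap_smul ℂ s v]; norm_num


lemma smul_decomp (c : ℂ) (v : V) : c • v = c.re • v + c.im • (Complex.I • v) := by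
  have h1 : ((c.re : ℂ)) • v = c.re • v := by
    rw [← IsScalarTower.algebraMap_smul ℂ c.re v]; norm_num
  have h2 : ((c.im : ℂ)) • (Complex.I • v) = c.im • (Complex.I • v) := by
    rw [← IsScalarTower.algebraMap_smul ℂ c.im (Complex.I • v)]; norm_num
  calc c • v = ((c.re : ℂ) + (c.im : ℂ) * Complex.I) • v := by rw [Complex.re_add_im]
  _ = ((c.re : ℂ)) • v + ((c.im : ℂ)) • (Complex.I • v) := by
      rw [add_smul, mul_smul]
  _ = c.re • v + c.im • (Complex.I • v) := by rw [h1, h2]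


end Deg2Lemmas

section AffineHelper
variable {W : Type*} [NormedAddCommGroup W] [NormedSpace ℝ W]

lemma aux_affineSpan (s : Set W) (h0 : (0:W) ∈ s) (hspan : Submodule.span ℝ s = ⊤) :
    affineSpan ℝ s = ⊤ := by
  rw [eq_top_iff]
  intro v hv'
  clear hv'
  have hv : v ∈ Submodule.span ℝ s := by rw [hspan]; trivial
  induction hv using Submodule.span_induction with
  | mem x hx => exact subset_affineSpan ℝ s hx
  | zero => exact subset_affineSpan ℝ s h0
  | add a b _ _ ha hb =>
    have h0' : (0:W) ∈ affineSpan ℝ s := subset_affineSpan ℝ s h0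
    have hmid : (1/2 : ℝ) • (a -ᵥ b) +ᵥ b ∈ affineSpan ℝ s :=
      AffineSubspace.smul_vsub_vadd_mem _ _ ha hb hb
    have : a + b = (2:ℝ) • (((1/2 : ℝ) • (a -ᵥ b) +ᵥ b) -ᵥ (0:W)) +ᵥ (0:W) := by
      simp only [vsub_eq_sub, vadd_eq_add, sub_zero, add_zero, smul_sub, smul_smul]
      norm_num
      module
    rw [this]
    exact AffineSubspace.smul_vsub_vadd_mem _ _ hmid h0' h0'
  | smul t a _ ha =>
    have h0' : (0:W) ∈ affineSpan ℝ s := subset_affineSpan ℝ s h0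
    have : t • a = t • (a -ᵥ (0:W)) +ᵥ (0:W) := by
      simp [vsub_eq_sub, vadd_eq_add]
    rw [this]
    exact AffineSubspace.smul_vsub_vadd_mem _ _ ha h0' h0'
end AffineHelper

section Geometric
variable {V : Type*} [NormedAddCommGroup V] [NormedSpace ℂ V] [FiniteDimensional ℂ V]

lemma barrier_TR (K : Set V)
    (hTR : ∀ w : V, w ∈ Submodule.span ℝ K → Complex.I • w ∈ Submodule.span ℝ K → w = 0) :
    ∃ F : V → ℂ, Deg2 F ∧ F 0 = 0 ∧ ∀ z ∈ K, z ≠ 0 → (F z).re < 0 := by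
  classical
  set E := Submodule.span ℝ K with hE
  set m := Module.finrank ℝ E with hm
  set bE : Module.Basis (Fin m) ℝ E := Module.finBasis ℝ E with hbE
  set e : Fin m → V := fun i => (bE i : V) with he
  have heE : ∀ i, e i ∈ E := fun i => (bE i).2
  -- complex linear independence
  have liℂ : LinearIndependent ℂ e := by
    rw [Fintype.linearIndependent_iff]
    intro g hg
    have hdecomp : ∑ i, g i • e i
        = (∑ i, (g i).re • e i) + Complex.I • (∑ i, (g i).im • e i) := by
      rw [Finset.smul_sum]
      rw [← Finset.sum_add_distrib]
      apply Finset.sum_congr rfl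
      intro i _
      rw [smul_decomp (g i) (e i), smul_comm]
    set X := ∑ i, (g i).re • e i with hX
    set Y := ∑ i, (g i).im • e i with hY
    have hXE : X ∈ E := Submodule.sum_mem _ fun i _ => Submodule.smul_mem _ _ (heE i)
    have hYE : Y ∈ E := Submodule.sum_mem _ fun i _ => Submodule.smul_mem _ _ (heE i)
    have hXY : X + Complex.I • Y = 0 := by rw [← hdecomp]; exact hg
    have hIY : Complex.I • Y ∈ E := by
      have : Complex.I • Y = -X := by linear_combination (norm := module) hXY
      rw [this]; exact Submodule.neg_mem _ hXE
    have hY0 : Y = 0 := hTR Y hYE hIY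
    have hX0 : X = 0 := by
      have := hXY; rw [hY0, smul_zero, add_zero] at this; exact this
    -- lift to E and use real independence
    have key : ∀ (c : Fin m → ℝ), ∑ i, c i • e i = 0 → ∀ i, c i = 0 := by
      intro c hc
      have hlift : (↑(∑ i, c i • bE i) : V) = ∑ i, c i • e i := by
        push_cast [he]; rfl
      have : ∑ i, c i • bE i = (0 : E) := by
        apply Subtype.ext; rw [hlift, hc]; rfl
      exact Fintype.linearIndependent_iff.mp bE.linearIndependent c this
    intro i
    have hre := key (fun i => (g i).re) hX0 i
    have him := key (fun i => (g i).im) hY0 i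
    exact Complex.ext hre him
  -- complex span and dual basis
  set W := Submodule.span ℂ (Set.range e) with hW
  set bW : Module.Basis (Fin m) ℂ W := Module.Basis.span liℂ with hbW
  obtain ⟨Q, hQ⟩ := Submodule.exists_isCompl W
  set prj := W.linearProjOfIsCompl Q hQ with hprj
  set φ : Fin m → V → ℂ := fun i z => bW.coord i (prj z) with hφ
  have hφlin : ∀ i, Lin1 (φ i) := by
    intro i
    constructor
    · exact ((bW.coord i).comp prj).continuous_of_finiteDimensional
    · intro a b c
      simp [hφ, map_add, _root_.map_smul, smul_eq_mul]
  set F : V → ℂ := fun z => ∑ i, ((0:ℂ) * φ i z + (-1:ℂ) * (φ i z * φ i z)) with hF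
  refine ⟨F, deg2_sum _ _ (fun i _ => (hφlin i).deg2_quad 0 (-1)), by simp [hF, hφ], ?_⟩
  intro z hz hz0
  have hzE : z ∈ E := Submodule.subset_span hz
  set t : Fin m → ℝ := fun i => bE.repr ⟨z, hzE⟩ i with ht
  have hz_sum : z = ∑ i, t i • e i := by
    have h1 := bE.sum_repr ⟨z, hzE⟩
    have h2 : (↑(∑ i, t i • bE i) : V) = ∑ i, t i • e i := by push_cast [he]; rfl
    rw [← h2, h1]
  have hcoe : ∀ (s : ℝ) (v : V), ((s : ℂ)) • v = s • v := fun s v => by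
    rw [← IsScalarTower.algebraMap_smul ℂ s v]; norm_num
  have hzW : z ∈ W := by
    rw [hz_sum]
    exact Submodule.sum_mem _ fun i _ => by
      rw [← hcoe]
      exact Submodule.smul_mem _ _ (Submodule.subset_span ⟨i, rfl⟩)
  have hprjz : prj z = ⟨z, hzW⟩ := by
    have := Submodule.linearProjOfIsCompl_apply_left hQ (⟨z, hzW⟩ : W)
    exact this
  have hwz : (⟨z, hzW⟩ : W) = ∑ i, ((t i : ℂ)) • bW i := by
    apply Subtype.ext
    push_cast
    refine hz_sum.trans (Finset.sum_congr rfl fun i _ => ?_)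
    rw [show ((bW i : V)) = e i from congrArg Subtype.val (Module.Basis.span_apply liℂ i), hcoe]
  have hφz : ∀ i, φ i z = (t i : ℂ) := by
    intro i
    rw [hφ]
    simp only [hprjz, hwz, Module.Basis.coord_apply]
    rw [Module.Basis.repr_sum_self]
  have hFz : (F z).re = ∑ i, -((t i)^2) := by
    rw [hF, Complex.re_sum]
    refine Finset.sum_congr rfl fun i _ => ?_
    rw [hφz i]
    norm_num
    ring
  rw [hFz]
  have hsn : ∑ i, -((t i)^2) = -∑ i, (t i)^2 := by simp
  rw [hsn, neg_lt, neg_zero]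
  have : ∃ i, t i ≠ 0 := by
    by_contra hall
    push_neg at hall
    apply hz0
    rw [hz_sum]
    simp [hall]
  obtain ⟨i, hi⟩ := this
  exact Finset.sum_pos' (fun j _ => sq_nonneg _) ⟨i, Finset.mem_univ i, by positivity⟩

lemma separation (K : Set V) (hconv : Convex ℝ K) (h0 : (0:V) ∈ K)
    (hNC : ∀ v : V, v ≠ 0 →
      ¬(v ∈ K ∧ -v ∈ K ∧ Complex.I • v ∈ K ∧ -(Complex.I • v) ∈ K))
    (hnTR : ∃ w : V, w ∈ Submodule.span ℝ K ∧ Complex.I • w ∈ Submodule.span ℝ K ∧ w ≠ 0) :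
    ∃ ℓ : V →ₗ[ℝ] ℝ, Continuous ℓ ∧ (∀ z ∈ K, ℓ z ≤ 0) ∧ ∃ z₀ ∈ K, ℓ z₀ < 0 := by
  classical
  set E := Submodule.span ℝ K with hE
  have hKE_sub : K ⊆ (E : Set V) := Submodule.subset_span
  set KE : Set E := Subtype.val ⁻¹' K with hKE
  have h0E : (0 : E) ∈ KE := by simpa [hKE] using h0
  have hconvE : Convex ℝ KE := hconv.linear_preimage E.subtype
  have hspanE : Submodule.span ℝ KE = ⊤ := by
    apply Submodule.map_injective_of_injective (f := E.subtype) E.injective_subtype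
    rw [Submodule.map_span, Submodule.map_top, Submodule.range_subtype]
    have himg : E.subtype '' KE = K := by
      show Subtype.val '' (Subtype.val ⁻¹' K) = K
      rw [Set.image_preimage_eq_inter_range, Subtype.range_coe]
      exact Set.inter_eq_self_of_subset_left hKE_sub
    rw [himg]
  have haff : affineSpan ℝ KE = ⊤ := aux_affineSpan KE h0E hspanE
  have hint : (interior KE).Nonempty :=
    (hconvE.interior_nonempty_iff_affineSpan_eq_top).mpr haff
  have h0ni : (0 : E) ∉ interior KE := by
    intro h0int
    rcases Metric.mem_nhds_iff.mp (mem_interior_iff_mem_nhds.mp h0int) with ⟨δ, hδ, hball⟩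
    obtain ⟨w, hwE, hIwE, hw0⟩ := hnTR
    set ε : ℝ := δ / (2 * (‖w‖ + 1)) with hεdef
    have hεpos : 0 < ε := by positivity
    have hwnorm : 0 ≤ ‖w‖ := norm_nonneg w
    have hnormlt : ε * ‖w‖ < δ := by
      have h1 : ε * ‖w‖ ≤ ε * (‖w‖ + 1) := by nlinarith
      have h2 : ε * (‖w‖ + 1) = δ / 2 := by rw [hεdef]; field_simp
      nlinarith
    have hmem : ∀ (x : V) (hx : x ∈ E), ‖x‖ = ‖w‖ → ε • x ∈ K := by
      intro x hx hxn
      have : (ε • (⟨x, hx⟩ : E)) ∈ KE := by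
        apply hball
        rw [Metric.mem_ball, dist_zero_right]
        rw [norm_smul]
        simp only [Submodule.coe_norm]
        simpa [abs_of_pos hεpos, hxn] using hnormlt
      simpa [hKE] using this
    have h1 : ε • w ∈ K := hmem w hwE rfl
    have h2 : -(ε • w) ∈ K := by
      have := hmem (-w) (Submodule.neg_mem _ hwE) (by simp)
      simpa using this
    have h3 : Complex.I • (ε • w) ∈ K := by
      have := hmem (Complex.I • w) hIwE (by rw [norm_smul, Complex.norm_I, one_mul])
      rwa [smul_comm]
    have h4 : -(Complex.I • (ε • w)) ∈ K := by
      have := hmem (-(Complex.I • w)) (Submodule.neg_mem _ hIwE)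
        (by rw [norm_neg, norm_smul, Complex.norm_I, one_mul])
      simpa [smul_neg, smul_comm ε Complex.I w] using this
    exact hNC (ε • w) (smul_ne_zero (ne_of_gt hεpos) hw0) ⟨h1, h2, h3, h4⟩
  obtain ⟨f, hf⟩ := geometric_hahn_banach_open_point hconvE.interior isOpen_interior h0ni
  have hf0 : ∀ a ∈ interior KE, f a < 0 := by
    intro a ha
    have := hf a ha
    simpa using this
  obtain ⟨y₀, hy₀⟩ := hint
  have hy₀K : y₀ ∈ KE := interior_subset hy₀
  have hy₀neg : f y₀ < 0 := hf0 y₀ hy₀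
  have hfK : ∀ z ∈ KE, f z ≤ 0 := by
    intro z hz
    by_contra hpos
    push_neg at hpos
    have hd : 0 < f z - f y₀ := by linarith
    set a : ℝ := f z / (2 * (f z - f y₀)) with hadef
    have ha1 : 0 < a := by positivity
    have ha2 : a ≤ 1/2 := by
      rw [hadef, div_le_iff₀ (by positivity)]
      nlinarith
    have hp : a • y₀ + (1-a) • z ∈ interior KE :=
      hconvE.combo_interior_self_mem_interior hy₀ hz ha1 (by linarith) (by ring)
    have hval : f (a • y₀ + (1-a) • z) = a * f y₀ + (1-a) * f z := by
      rw [map_add, _root_.map_smul, _root_.map_smul]; rfl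
    have := hf0 _ hp
    rw [hval] at this
    have hkey : a * (f z - f y₀) = f z / 2 := by
      rw [hadef]; field_simp
    nlinarith
  obtain ⟨Q, hQ⟩ := Submodule.exists_isCompl E
  set prjE := E.linearProjOfIsCompl Q hQ with hprjE
  set ℓ : V →ₗ[ℝ] ℝ := (f : E →ₗ[ℝ] ℝ).comp prjE with hℓ
  refine ⟨ℓ, ℓ.continuous_of_finiteDimensional, ?_, ?_⟩
  · intro z hz
    have hzE : z ∈ E := hKE_sub hz
    have : prjE z = ⟨z, hzE⟩ := Submodule.linearProjOfIsCompl_apply_left hQ ⟨z, hzE⟩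
    show f (prjE z) ≤ 0
    rw [this]
    exact hfK _ (by simpa [hKE] using hz)
  · refine ⟨y₀, by simpa [hKE] using hy₀K, ?_⟩
    have hyE : (y₀ : V) ∈ E := y₀.2
    have : prjE (y₀ : V) = y₀ := Submodule.linearProjOfIsCompl_apply_left hQ y₀
    show f (prjE (y₀ : V)) < 0
    rw [this]
    exact hy₀neg

lemma lin1_fbar {V : Type*} [NormedAddCommGroup V] [NormedSpace ℂ V]
    (ℓ : V →ₗ[ℝ] ℝ) (hℓc : Continuous ℓ) :
    Lin1 (fun z => ((ℓ z : ℝ) : ℂ) - Complex.I * ((ℓ (Complex.I • z) : ℝ) : ℂ)) := by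
  constructor
  · exact (Complex.continuous_ofReal.comp hℓc).sub
      (continuous_const.mul (Complex.continuous_ofReal.comp
        (hℓc.comp (continuous_const_smul Complex.I))))
  · intro a b c
    have h1 : ℓ (a + c • b) = ℓ a + c.re * ℓ b + c.im * ℓ (Complex.I • b) := by
      rw [smul_decomp c b, ← add_assoc]
      simp only [map_add, _root_.map_smul, smul_eq_mul]
      try ring
    have h2 : ℓ (Complex.I • (a + c • b))
        = ℓ (Complex.I • a) - c.im * ℓ b + c.re * ℓ (Complex.I • b) := by
      have he : Complex.I • (a + c • b) = Complex.I • a + (Complex.I * c) • b := by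
        rw [smul_add, smul_smul]
      rw [he, smul_decomp (Complex.I * c) b, ← add_assoc]
      simp only [map_add, _root_.map_smul, smul_eq_mul, Complex.mul_re, Complex.mul_im,
        Complex.I_re, Complex.I_im]
      try ring
    show ((ℓ (a + c • b) : ℝ) : ℂ) - Complex.I * ((ℓ (Complex.I • (a + c • b)) : ℝ) : ℂ) = _
    rw [h1, h2]
    apply Complex.ext <;>
      simp only [Complex.sub_re, Complex.sub_im, Complex.add_re, Complex.add_im,
        Complex.mul_re, Complex.mul_im, Complex.ofReal_re, Complex.ofReal_im,
        Complex.I_re, Complex.I_im] <;> ring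


theorem barrier_main (d : ℕ) : ∀ (K : Set V), IsCompact K → Convex ℝ K → (0:V) ∈ K →
    (∀ v : V, v ≠ 0 →
      ¬(v ∈ K ∧ -v ∈ K ∧ Complex.I • v ∈ K ∧ -(Complex.I • v) ∈ K)) →
    Module.finrank ℝ (Submodule.span ℝ K) ≤ d → ∀ r : ℝ, 0 < r →
    ∃ F : V → ℂ, Deg2 F ∧ F 0 = 0 ∧ ∀ z ∈ K, ‖z‖ = r → (F z).re < 0 := by
  induction d with
  | zero =>
    intro K hK hconv h0 hNC hrank r hr
    by_cases hTR : ∀ w : V, w ∈ Submodule.span ℝ K → Complex.I • w ∈ Submodule.span ℝ K → w = 0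
    · obtain ⟨F, h1, h2, h3⟩ := barrier_TR K hTR
      exact ⟨F, h1, h2, fun z hz hzr => h3 z hz (fun h => by simp [h] at hzr; exact hr.ne' hzr.symm)⟩
    · exfalso
      push_neg at hTR
      obtain ⟨w, hwE, hIwE, hw0⟩ := hTR
      have : Submodule.span ℝ K = ⊥ := by
        have := Nat.le_zero.mp hrank
        exact Submodule.finrank_eq_zero.mp this
      rw [this] at hwE
      exact hw0 (Submodule.mem_bot ℝ |>.mp hwE)
  | succ d ih =>
    intro K hK hconv h0 hNC hrank r hr
    by_cases hTR : ∀ w : V, w ∈ Submodule.span ℝ K → Complex.I • w ∈ Submodule.span ℝ K → w = 0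
    · obtain ⟨F, h1, h2, h3⟩ := barrier_TR K hTR
      exact ⟨F, h1, h2, fun z hz hzr => h3 z hz (fun h => by simp [h] at hzr; exact hr.ne' hzr.symm)⟩
    push_neg at hTR
    obtain ⟨ℓ, hℓc, hℓK, z₀, hz₀K, hz₀neg⟩ := separation K hconv h0 hNC hTR
    set fb : V → ℂ := fun z => ((ℓ z : ℝ) : ℂ) - Complex.I * ((ℓ (Complex.I • z) : ℝ) : ℂ)
      with hfb
    have hlin : Lin1 fb := lin1_fbar ℓ hℓc
    obtain ⟨M₀, hM₀⟩ := hK.exists_bound_of_continuousOn hlin.1.continuousOn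
    set A : ℝ := M₀ + 1 with hA
    set p : V → ℂ := fun z => ((A : ℝ) : ℂ) * fb z + 1 * (fb z * fb z) with hp
    have hpdeg : Deg2 p := hlin.deg2_quad A 1
    have hfre : ∀ z, (fb z).re = ℓ z := by
      intro z
      simp [hfb, Complex.sub_re, Complex.mul_re]
    have hfim : ∀ z, (fb z).im = -ℓ (Complex.I • z) := by
      intro z
      simp [hfb, Complex.sub_im, Complex.mul_im]
    have hpre : ∀ z, (p z).re = A * ℓ z + ((ℓ z)^2 - (ℓ (Complex.I • z))^2) := by
      intro z
      simp only [hp, Complex.add_re, Complex.mul_re, Complex.ofReal_re, Complex.ofReal_im,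
        Complex.one_re, Complex.one_im, hfre, hfim]
      ring
    have hbound : ∀ z ∈ K, A + ℓ z ≥ 1 := by
      intro z hz
      have h1 : |(fb z).re| ≤ ‖fb z‖ := Complex.abs_re_le_norm _
      rw [hfre] at h1
      have := hM₀ z hz
      have := abs_le.mp (le_trans h1 this)
      simp only [hA]
      linarith [this.1]
    have hpK : ∀ z ∈ K, (p z).re ≤ 0 := by
      intro z hz
      rw [hpre]
      have h1 := hℓK z hz
      have h2 := hbound z hz
      nlinarith [sq_nonneg (ℓ (Complex.I • z))]
    have hp0 : ∀ z ∈ K, (p z).re = 0 → ℓ z = 0 ∧ ℓ (Complex.I • z) = 0 := by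
      intro z hz hzero
      rw [hpre] at hzero
      have h1 := hℓK z hz
      have h2 := hbound z hz
      constructor <;> nlinarith [sq_nonneg (ℓ (Complex.I • z)), sq_nonneg (ℓ z)]
    have hp00 : p 0 = 0 := by
      simp [hp, hfb]
    -- the exposed face
    set K' : Set V := K ∩ (ℓ ⁻¹' {0} ∩ (fun z => ℓ (Complex.I • z)) ⁻¹' {0}) with hK'def
    have hK'K : K' ⊆ K := Set.inter_subset_left
    have hK'c : IsCompact K' := by
      apply hK.inter_right
      exact ((isClosed_singleton.preimage hℓc).inter
        (isClosed_singleton.preimage (hℓc.comp (continuous_const_smul Complex.I))))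
    have hK'conv : Convex ℝ K' := by
      apply hconv.inter
      apply Convex.inter
      · exact (convex_singleton (0:ℝ)).linear_preimage ℓ
      · exact (convex_singleton (0:ℝ)).linear_preimage
          (ℓ.comp ((LinearMap.lsmul ℂ V Complex.I).restrictScalars ℝ))
    have hK'0 : (0:V) ∈ K' := by
      refine ⟨h0, ?_, ?_⟩ <;> simp
    have hK'NC : ∀ v : V, v ≠ 0 →
        ¬(v ∈ K' ∧ -v ∈ K' ∧ Complex.I • v ∈ K' ∧ -(Complex.I • v) ∈ K') := by
      intro v hv h4
      exact hNC v hv ⟨hK'K h4.1, hK'K h4.2.1, hK'K h4.2.2.1, hK'K h4.2.2.2⟩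
    have hK'rank : Module.finrank ℝ (Submodule.span ℝ K') ≤ d := by
      have hle : Submodule.span ℝ K' ≤ Submodule.span ℝ K ⊓ LinearMap.ker ℓ := by
        rw [Submodule.span_le]
        intro z hz
        exact ⟨Submodule.subset_span (hK'K hz), by
          simp only [SetLike.mem_coe, LinearMap.mem_ker]
          exact hz.2.1⟩
      have hlt : Submodule.span ℝ K ⊓ LinearMap.ker ℓ < Submodule.span ℝ K := by
        apply lt_of_le_of_ne inf_le_left
        intro h
        have hz₀mem : z₀ ∈ Submodule.span ℝ K := Submodule.subset_span hz₀K
        rw [← h] at hz₀mem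
        have : ℓ z₀ = 0 := hz₀mem.2
        linarith
      have h1 := Submodule.finrank_mono hle
      have h2 := Submodule.finrank_lt_finrank_of_lt hlt
      omega
    obtain ⟨F', hF'deg, hF'0, hF'neg⟩ := ih K' hK'c hK'conv hK'0 hK'NC hK'rank r hr
    -- combination
    have hzero_to_K' : ∀ z ∈ K, (p z).re = 0 → z ∈ K' := by
      intro z hz hzero
      obtain ⟨e1, e2⟩ := hp0 z hz hzero
      exact ⟨hz, by simpa using e1, by simpa using e2⟩
    by_cases hK'S : (K' ∩ Metric.sphere (0:V) r).Nonempty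
    case neg =>
      -- K' misses the sphere : p itself works
      refine ⟨p, hpdeg, hp00, ?_⟩
      intro z hz hzr
      rcases lt_or_eq_of_le (hpK z hz) with h | h
      · exact h
      · exfalso
        apply hK'S
        exact ⟨z, hzero_to_K' z hz h, by simpa [Metric.mem_sphere, dist_zero_right] using hzr⟩
    case pos =>
      have hK'Sc : IsCompact (K' ∩ Metric.sphere (0:V) r) :=
        hK'c.inter_right Metric.isClosed_sphere
      obtain ⟨zM, hzM, hzMmax⟩ := hK'Sc.exists_isMaxOn hK'S
        ((Complex.continuous_re.comp hF'deg.1).continuousOn)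
      set η : ℝ := -(F' zM).re / 2 with hη
      have hηpos : 0 < η := by
        have : (F' zM).re < 0 := hF'neg zM hzM.1
          (by simpa [Metric.mem_sphere, dist_zero_right] using hzM.2)
        simp only [hη]
        linarith
      have hmaxval : ∀ z ∈ K' ∩ Metric.sphere (0:V) r, (F' z).re ≤ -2*η := by
        intro z hz
        have h' : (F' z).re ≤ (F' zM).re := hzMmax hz
        simp only [hη]
        linarith
      set U : Set V := {z | (F' z).re < -η} with hU
      have hUopen : IsOpen U := isOpen_lt (Complex.continuous_re.comp hF'deg.1) continuous_const
      have hK'SU : K' ∩ Metric.sphere (0:V) r ⊆ U := by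
        intro z hz
        have := hmaxval z hz
        simp only [hU, Set.mem_setOf_eq]
        linarith
      set T : Set V := (K ∩ Metric.sphere (0:V) r) \ U with hT
      have hTc : IsCompact T := (hK.inter_right Metric.isClosed_sphere).diff hUopen
      have hTneg : ∀ z ∈ T, (p z).re < 0 := by
        intro z hz
        rcases lt_or_eq_of_le (hpK z hz.1.1) with h | h
        · exact h
        · exfalso
          exact hz.2 (hK'SU ⟨hzero_to_K' z hz.1.1 h, hz.1.2⟩)
      -- choose constants
      have hKS_ne : (K ∩ Metric.sphere (0:V) r).Nonempty := by
        obtain ⟨z, hz⟩ := hK'S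
        exact ⟨z, hK'K hz.1, hz.2⟩
      obtain ⟨zN, hzN, hzNmax⟩ := (hK.inter_right Metric.isClosed_sphere).exists_isMaxOn hKS_ne
        ((Complex.continuous_re.comp hF'deg.1).continuousOn)
      set M : ℝ := (F' zN).re with hM
      have hMbound : ∀ z ∈ K ∩ Metric.sphere (0:V) r, (F' z).re ≤ M := fun z hz => hzNmax hz
      have hCex : ∃ C : ℝ, 0 ≤ C ∧ ∀ z ∈ T, C * (p z).re + M < 0 := by
        rcases T.eq_empty_or_nonempty with hTe | hTne
        · rcases le_or_gt 0 M with hM0 | hM0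
          · refine ⟨0, le_refl 0, fun z hz => by rw [hTe] at hz; exact absurd hz (Set.notMem_empty z)⟩
          · exact ⟨0, le_refl 0, fun z hz => by rw [hTe] at hz; exact absurd hz (Set.notMem_empty z)⟩
        · obtain ⟨zT, hzT, hzTmax⟩ := hTc.exists_isMaxOn hTne
            ((Complex.continuous_re.comp hpdeg.1).continuousOn)
          set δ : ℝ := -(p zT).re with hδ
          have hδpos : 0 < δ := by
            have := hTneg zT hzT
            simp only [hδ]; linarith
          refine ⟨(|M| + 1)/δ, by positivity, ?_⟩
          intro z hz
          have h1 : (p z).re ≤ -δ := by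
            have h' : (p z).re ≤ (p zT).re := hzTmax hz
            simp only [hδ]; linarith
          have h2 : (|M| + 1)/δ * (p z).re ≤ (|M| + 1)/δ * (-δ) := by
            apply mul_le_mul_of_nonneg_left h1 (by positivity)
          have h3 : (|M| + 1)/δ * (-δ) = -(|M| + 1) := by field_simp
          have h4 : M ≤ |M| := le_abs_self M
          nlinarith
      obtain ⟨C, hC0, hCT⟩ := hCex
      refine ⟨fun z => ((C:ℝ):ℂ) * p z + F' z, (hpdeg.const_mul C).add hF'deg, ?_, ?_⟩
      · simp [hp00, hF'0]
      · intro z hz hzr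
        have hsphere : z ∈ Metric.sphere (0:V) r := by
          simpa [Metric.mem_sphere, dist_zero_right] using hzr
        have hre : ((((C:ℝ):ℂ)) * p z + F' z).re = C * (p z).re + (F' z).re := by
          simp [Complex.add_re, Complex.mul_re]
        rw [hre]
        by_cases hzU : z ∈ U
        · have h1 : (F' z).re < -η := hzU
          have h2 : C * (p z).re ≤ 0 := mul_nonpos_of_nonneg_of_nonpos hC0 (hpK z hz)
          linarith
        · have hzT : z ∈ T := ⟨⟨hz, hsphere⟩, hzU⟩
          have h1 := hCT z hzT
          have h2 := hMbound z ⟨hz, hsphere⟩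
          linarith

end Geometric

section DiskSection
variable {V : Type*} [NormedAddCommGroup V] [NormedSpace ℂ V]

lemma disk_package (S : Set V) (hconv : Convex ℝ S) (x v : V) (hv : v ≠ 0)
    (h1 : x + v ∈ S) (h2 : x - v ∈ S)
    (h3 : x + Complex.I • v ∈ S) (h4 : x - Complex.I • v ∈ S) :
    ∃ C : Set V, C ⊆ S ∧ Convex ℝ C ∧
      (∃ (p w : V), w ≠ 0 ∧
        (affineSpan ℝ C : Set V) = {y | ∃ c : ℂ, y = p + c • w}) ∧
      x ∈ intrinsicInterior ℝ C := by
  classical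
  set C : Set V := {y | ∃ c : ℂ, ‖c‖ ≤ 1/2 ∧ y = x + c • v} with hC
  -- C ⊆ S
  have hseg : ∀ t : ℝ, |t| ≤ 1 → x + t • v ∈ S := by
    intro t ht
    have habs := abs_le.mp ht
    have hcomb := hconv h1 h2 (a := (1+t)/2) (b := (1-t)/2)
      (by linarith) (by linarith) (by ring)
    have : ((1+t)/2) • (x + v) + ((1-t)/2) • (x - v) = x + t • v := by
      match_scalars <;> ring
    rwa [this] at hcomb
  have hsegI : ∀ t : ℝ, |t| ≤ 1 → x + t • (Complex.I • v) ∈ S := by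
    intro t ht
    have habs := abs_le.mp ht
    have hcomb := hconv h3 h4 (a := (1+t)/2) (b := (1-t)/2)
      (by linarith) (by linarith) (by ring)
    have : ((1+t)/2) • (x + Complex.I • v) + ((1-t)/2) • (x - Complex.I • v)
        = x + t • (Complex.I • v) := by
      match_scalars <;> ring
    rwa [this] at hcomb
  have hCS : C ⊆ S := by
    rintro y ⟨c, hcn, rfl⟩
    have hre : |c.re| ≤ 1/2 := le_trans (Complex.abs_re_le_norm c) hcn
    have him : |c.im| ≤ 1/2 := le_trans (Complex.abs_im_le_norm c) hcn
    have hs1 : x + (2*c.re) • v ∈ S := hseg _ (by rw [abs_mul]; simp; linarith [abs_nonneg c.re])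
    have hs2 : x + (2*c.im) • (Complex.I • v) ∈ S :=
      hsegI _ (by rw [abs_mul]; simp; linarith [abs_nonneg c.im])
    have hcomb := hconv hs1 hs2 (a := (1/2:ℝ)) (b := (1/2:ℝ))
      (by norm_num) (by norm_num) (by norm_num)
    have : (1/2:ℝ) • (x + (2*c.re) • v) + (1/2:ℝ) • (x + (2*c.im) • (Complex.I • v))
        = x + c • v := by
      rw [smul_decomp c v]
      match_scalars <;> ring
    rwa [this] at hcomb
  -- convexity
  have hCconv : Convex ℝ C := by
    rintro y1 ⟨c1, hc1, rfl⟩ y2 ⟨c2, hc2, rfl⟩ a b ha hb hab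
    refine ⟨(a:ℂ) * c1 + (b:ℂ) * c2, ?_, ?_⟩
    · calc ‖(a:ℂ) * c1 + (b:ℂ) * c2‖ ≤ ‖(a:ℂ) * c1‖ + ‖(b:ℂ) * c2‖ := norm_add_le _ _
      _ = a * ‖c1‖ + b * ‖c2‖ := by
          rw [norm_mul, norm_mul, Complex.norm_real, Complex.norm_real,
            Real.norm_eq_abs, Real.norm_eq_abs, abs_of_nonneg ha, abs_of_nonneg hb]
      _ ≤ a * (1/2) + b * (1/2) := by
          apply add_le_add <;> apply mul_le_mul_of_nonneg_left <;> assumption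
      _ = 1/2 := by linarith
    · have e1 : a • (x + c1 • v) = a • x + ((a:ℂ) * c1) • v := by
        rw [smul_add, mul_smul, coesmul]
      have e2 : b • (x + c2 • v) = b • x + ((b:ℂ) * c2) • v := by
        rw [smul_add, mul_smul, coesmul]
      rw [e1, e2, add_smul]
      have : a • x + b • x = x := by
        rw [← add_smul, hab, one_smul]
      rw [show a • x + ((a:ℂ)*c1) • v + (b • x + ((b:ℂ)*c2) • v)
          = (a • x + b • x) + (((a:ℂ)*c1) • v + ((b:ℂ)*c2) • v) by abel, this]
  -- the affine line
  set L : Set V := {y | ∃ c : ℂ, y = x + c • v} with hL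
  have hvadd : ∀ (t : ℝ) (c1 c2 c3 : ℂ),
      t • ((x + c1 • v) -ᵥ (x + c2 • v)) +ᵥ (x + c3 • v)
        = x + ((t:ℂ) * (c1 - c2) + c3) • v := by
    intro t c1 c2 c3
    rw [vsub_eq_sub, vadd_eq_add]
    have e1 : (x + c1 • v) - (x + c2 • v) = (c1 - c2) • v := by
      rw [sub_smul]; abel
    rw [e1, ← coesmul t, smul_smul, add_smul]
    abel
  set L' : AffineSubspace ℝ V :=
    { carrier := L
      smul_vsub_vadd_mem' := by
        rintro t p1 p2 p3 ⟨c1, rfl⟩ ⟨c2, rfl⟩ ⟨c3, rfl⟩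
        exact ⟨(t:ℂ) * (c1 - c2) + c3, (hvadd t c1 c2 c3).symm ▸ rfl⟩ } with hL'
  have hCL : C ⊆ L := by rintro y ⟨c, _, rfl⟩; exact ⟨c, rfl⟩
  have hspan_eq : (affineSpan ℝ C : Set V) = L := by
    apply subset_antisymm
    · have hle : affineSpan ℝ C ≤ L' := affineSpan_le.mpr hCL
      intro y hy
      exact hle hy
    · rintro y ⟨c, rfl⟩
      have hp1 : x + (((1/2:ℝ):ℂ)) • v ∈ C :=
        ⟨((1/2:ℝ):ℂ), by rw [Complex.norm_real]; norm_num, rfl⟩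
      have hp2 : x + (((1/2:ℝ):ℂ) * Complex.I) • v ∈ C :=
        ⟨((1/2:ℝ):ℂ) * Complex.I, by
          rw [norm_mul, Complex.norm_real, Complex.norm_I]; norm_num, rfl⟩
      have hx : x ∈ C := ⟨0, by norm_num, by simp⟩
      have m1 := subset_affineSpan ℝ C hp1
      have m2 := subset_affineSpan ℝ C hp2
      have mx := subset_affineSpan ℝ C hx
      have inner : (2*c.im) • ((x + (((1/2:ℝ):ℂ) * Complex.I) • v) -ᵥ x) +ᵥ x
          ∈ affineSpan ℝ C :=
        AffineSubspace.smul_vsub_vadd_mem _ _ m2 mx mx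
      have outer : (2*c.re) • ((x + (((1/2:ℝ):ℂ)) • v) -ᵥ x) +ᵥ
          ((2*c.im) • ((x + (((1/2:ℝ):ℂ) * Complex.I) • v) -ᵥ x) +ᵥ x)
          ∈ affineSpan ℝ C :=
        AffineSubspace.smul_vsub_vadd_mem _ _ m1 mx inner
      have hs1 : (2*c.re) • ((x + (((1/2:ℝ):ℂ)) • v) -ᵥ x) = c.re • v := by
        rw [vsub_eq_sub, add_sub_cancel_left, coesmul, smul_smul]
        congr 1
        ring
      have hs2 : (2*c.im) • ((x + (((1/2:ℝ):ℂ) * Complex.I) • v) -ᵥ x)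
          = c.im • (Complex.I • v) := by
        have hh : ((((1/2:ℝ):ℂ)) * Complex.I) • v = (1/2:ℝ) • (Complex.I • v) := by
          rw [mul_smul, coesmul]
        rw [vsub_eq_sub, add_sub_cancel_left, hh, smul_smul]
        congr 1
        ring
      have hkey : (2*c.re) • ((x + (((1/2:ℝ):ℂ)) • v) -ᵥ x) +ᵥ
          ((2*c.im) • ((x + (((1/2:ℝ):ℂ) * Complex.I) • v) -ᵥ x) +ᵥ x)
          = x + c • v := by
        rw [hs1, hs2, vadd_eq_add, vadd_eq_add, smul_decomp c v]
        abel
      rw [← hkey]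
      exact outer
  refine ⟨C, hCS, hCconv, ⟨x, v, hv, hspan_eq⟩, ?_⟩
  -- intrinsic interior
  have hxC : x ∈ C := ⟨0, by norm_num, by simp⟩
  have hxA : x ∈ affineSpan ℝ C := subset_affineSpan ℝ C hxC
  have hvn : 0 < ‖v‖ := norm_pos_iff.mpr hv
  rw [mem_intrinsicInterior]
  refine ⟨⟨x, hxA⟩, ?_, rfl⟩
  rw [mem_interior_iff_mem_nhds, Metric.mem_nhds_iff]
  refine ⟨‖v‖/4, by positivity, ?_⟩
  rintro ⟨y, hyA⟩ hyball
  have hyL : y ∈ L := by rw [← hspan_eq]; exact hyA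
  obtain ⟨c, rfl⟩ := hyL
  have hdist : dist (x + c • v) x < ‖v‖/4 := by
    have := hyball
    rw [Metric.mem_ball, Subtype.dist_eq] at this
    exact this
  have hnorm : ‖c‖ * ‖v‖ < ‖v‖/4 := by
    rw [dist_eq_norm, add_sub_cancel_left, norm_smul] at hdist
    exact hdist
  have hcle : ‖c‖ ≤ 1/2 := by
    nlinarith [norm_nonneg c]
  exact ⟨c, hcle, rfl⟩

end DiskSection

/-- **Theorem (minimum principle for maximal psh functions).**
If `u ≥ 0` is a continuous maximal plurisubharmonic function on a domain `D ⊆ ℂⁿ`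
whose zero set is nonempty and convex, then every point of the zero set lies in the
relative interior of a complex one-dimensional convex set contained in the zero set. -/
theorem min_principle_maximal_psh {n : ℕ} (D : Set (EuclideanSpace ℂ (Fin n)))
    (hD_open : IsOpen D) (hD_conn : IsConnected D)
    (u : EuclideanSpace ℂ (Fin n) → ℝ)
    (hu_cont : ContinuousOn u D) (hu_psh : IsPshOn D u)
    (hu_nonneg : ∀ z ∈ D, 0 ≤ u z) (hu_max : IsMaximalPshOn D u)
    (hZ_ne : {z ∈ D | u z = 0}.Nonempty) (hZ_conv : Convex ℝ {z ∈ D | u z = 0}) :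
    ∀ x ∈ {z ∈ D | u z = 0},
      ∃ C : Set (EuclideanSpace ℂ (Fin n)), C ⊆ {z ∈ D | u z = 0} ∧ Convex ℝ C ∧
        (∃ (p v : EuclideanSpace ℂ (Fin n)), v ≠ 0 ∧
          (affineSpan ℝ C : Set (EuclideanSpace ℂ (Fin n))) =
            {w | ∃ c : ℂ, w = p + c • v}) ∧
        x ∈ intrinsicInterior ℝ C := by
  classical
  intro x hx
  obtain ⟨hxD, hxu⟩ := hx
  set Z := {z ∈ D | u z = 0} with hZ
  obtain ⟨R, hR, hRD⟩ := Metric.isOpen_iff.mp hD_open x hxD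
  set r : ℝ := R / 2 with hrdef
  have hr : 0 < r := by positivity
  have hrD : Metric.closedBall x r ⊆ D :=
    (Metric.closedBall_subset_ball (by simp only [hrdef]; linarith)).trans hRD
  by_cases hcross : ∃ v, v ≠ 0 ∧ x + v ∈ Z ∧ x - v ∈ Z ∧
      x + Complex.I • v ∈ Z ∧ x - Complex.I • v ∈ Z
  · obtain ⟨v, hv, c1, c2, c3, c4⟩ := hcross
    exact disk_package Z hZ_conv x v hv c1 c2 c3 c4
  · exfalso
    push_neg at hcross
    -- construct compact convex K around 0
    have hZcb_closed : IsClosed (Z ∩ Metric.closedBall x r) := by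
      have h1 : IsClosed (Metric.closedBall x r ∩ u ⁻¹' {0}) :=
        (hu_cont.mono hrD).preimage_isClosed_of_isClosed Metric.isClosed_closedBall
          isClosed_singleton
      have h2 : Z ∩ Metric.closedBall x r = Metric.closedBall x r ∩ u ⁻¹' {0} := by
        ext z
        constructor
        · rintro ⟨⟨_, hzu⟩, hzb⟩; exact ⟨hzb, hzu⟩
        · rintro ⟨hzb, hzu⟩; exact ⟨⟨hrD hzb, hzu⟩, hzb⟩
      rw [h2]; exact h1
    have hZcb_cpt : IsCompact (Z ∩ Metric.closedBall x r) :=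
      (isCompact_closedBall x r).of_isClosed_subset hZcb_closed Set.inter_subset_right
    set K := (fun z => -x + z) '' (Z ∩ Metric.closedBall x r) with hKdef
    have hKmem : ∀ w, w ∈ K ↔ x + w ∈ Z ∩ Metric.closedBall x r := by
      intro w
      constructor
      · rintro ⟨z, hz, rfl⟩
        have : x + (-x + z) = z := by abel
        rwa [this]
      · intro hw
        refine ⟨x + w, hw, ?_⟩
        show -x + (x + w) = w
        abel
    have hKcpt : IsCompact K :=
      hZcb_cpt.image (continuous_const.add continuous_id)
    have hKconv : Convex ℝ K := (hZ_conv.inter (convex_closedBall x r)).translate (-x)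
    have hK0 : (0:EuclideanSpace ℂ (Fin n)) ∈ K := by
      rw [hKmem]
      rw [add_zero]
      exact ⟨⟨hxD, hxu⟩, Metric.mem_closedBall_self hr.le⟩
    have hKNC : ∀ v, v ≠ 0 →
        ¬(v ∈ K ∧ -v ∈ K ∧ Complex.I • v ∈ K ∧ -(Complex.I • v) ∈ K) := by
      rintro v hv ⟨m1, m2, m3, m4⟩
      rw [hKmem] at m1 m2 m3 m4
      refine hcross v hv m1.1 ?_ m3.1 ?_
      · have : x - v = x + -v := by abel
        rw [this]; exact m2.1
      · have : x - Complex.I • v = x + -(Complex.I • v) := by abel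
        rw [this]; exact m4.1
    obtain ⟨F, hFdeg, hF0, hFneg⟩ := barrier_main (Module.finrank ℝ (EuclideanSpace ℂ (Fin n))) K hKcpt hKconv hK0 hKNC
      (Submodule.finrank_le _) r hr
    -- negativity on the zero set ∩ sphere
    have hFcont : Continuous fun z => (F (z - x)).re :=
      Complex.continuous_re.comp (hFdeg.1.comp (continuous_id.sub continuous_const))
    have hZsph : ∀ z ∈ Z ∩ Metric.sphere x r, (F (z - x)).re < 0 := by
      rintro z ⟨hzZ, hzs⟩
      have hzb : z ∈ Metric.closedBall x r := Metric.sphere_subset_closedBall hzs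
      have hzK : z - x ∈ K := by
        rw [hKmem]
        have : x + (z - x) = z := by abel
        rw [this]; exact ⟨hzZ, hzb⟩
      apply hFneg _ hzK
      rw [Metric.mem_sphere] at hzs
      rw [← hzs, dist_eq_norm]
    obtain ⟨ε, hε, hZsph2⟩ : ∃ ε : ℝ, 0 < ε ∧
        ∀ z ∈ Z ∩ Metric.sphere x r, (F (z - x)).re ≤ -(2*ε) := by
      rcases (Z ∩ Metric.sphere x r).eq_empty_or_nonempty with he | hne
      · exact ⟨1, one_pos, fun z hz => by rw [he] at hz; exact absurd hz (Set.notMem_empty z)⟩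
      · have hZscpt : IsCompact (Z ∩ Metric.sphere x r) := by
          have heq : Z ∩ Metric.sphere x r
              = (Z ∩ Metric.closedBall x r) ∩ Metric.sphere x r := by
            ext z
            constructor
            · rintro ⟨h1, h2⟩; exact ⟨⟨h1, Metric.sphere_subset_closedBall h2⟩, h2⟩
            · rintro ⟨⟨h1, _⟩, h2⟩; exact ⟨h1, h2⟩
          rw [heq]
          exact hZcb_cpt.inter_right Metric.isClosed_sphere
        obtain ⟨zE, hzE, hzEmax⟩ := hZscpt.exists_isMaxOn hne hFcont.continuousOn
        refine ⟨-(F (zE - x)).re / 2, by linarith [hZsph zE hzE], ?_⟩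
        intro z hz
        have h' : (F (z - x)).re ≤ (F (zE - x)).re := hzEmax hz
        linarith
    -- the bad set on the sphere
    set Aset := Metric.sphere x r ∩ {z | -ε ≤ (F (z - x)).re} with hAdef
    have hAcpt : IsCompact Aset :=
      (isCompact_closedBall x r).of_isClosed_subset
        (Metric.isClosed_sphere.inter (isClosed_le continuous_const hFcont))
        (fun z hz => Metric.sphere_subset_closedBall hz.1)
    have hAD : Aset ⊆ D := fun z hz => hrD (Metric.sphere_subset_closedBall hz.1)
    have hApos : ∀ z ∈ Aset, 0 < u z := by
      rintro z ⟨hzs, hzF⟩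
      rcases lt_or_eq_of_le (hu_nonneg z (hAD ⟨hzs, hzF⟩)) with h | h
      · exact h
      · exfalso
        have hzZ : z ∈ Z := ⟨hAD ⟨hzs, hzF⟩, h.symm⟩
        have := hZsph2 z ⟨hzZ, hzs⟩
        have : -ε ≤ (F (z - x)).re := hzF
        linarith [hZsph2 z ⟨hzZ, hzs⟩]
    obtain ⟨m, hm, hmA⟩ : ∃ m : ℝ, 0 < m ∧ ∀ z ∈ Aset, m ≤ u z := by
      rcases Aset.eq_empty_or_nonempty with he | hne
      · exact ⟨1, one_pos, fun z hz => by rw [he] at hz; exact absurd hz (Set.notMem_empty z)⟩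
      · obtain ⟨zm, hzm, hzmmin⟩ := hAcpt.exists_isMinOn hne (hu_cont.mono hAD)
        exact ⟨u zm, hApos zm hzm, fun z hz => hzmmin hz⟩
    obtain ⟨Mb, hMb0, hMb⟩ : ∃ Mb : ℝ, 0 ≤ Mb ∧
        ∀ z ∈ Metric.sphere x r, (F (z - x)).re ≤ Mb := by
      rcases (Metric.sphere x r).eq_empty_or_nonempty with he | hne
      · exact ⟨0, le_refl 0, fun z hz => by rw [he] at hz; exact absurd hz (Set.notMem_empty z)⟩
      · obtain ⟨zb, hzb, hzbmax⟩ := (isCompact_sphere x r).exists_isMaxOn hne hFcont.continuousOn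
        refine ⟨max (F (zb - x)).re 0, le_max_right _ _, ?_⟩
        intro z hz
        exact le_trans (hzbmax hz) (le_max_left _ _)
    set t : ℝ := m / (Mb + ε + 1) with htdef
    have ht : 0 < t := by positivity
    set w : EuclideanSpace ℂ (Fin n) → ℝ := fun z => t * ((F (z - x)).re + ε) with hwdef
    -- apply maximality
    have hGcl : closure (Metric.ball x r) ⊆ Metric.closedBall x r :=
      Metric.closure_ball_subset_closedBall
    have hmax := hu_max (Metric.ball x r) Metric.isOpen_ball
      ((isCompact_closedBall x r).of_isClosed_subset isClosed_closure hGcl)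
      (hGcl.trans hrD) w
      (((continuous_const.mul (hFcont.add continuous_const)).upperSemicontinuous).upperSemicontinuousOn _)
      (deg2_psh hFdeg x t ε _)
      ?_ x (Metric.mem_ball_self hr)
    · have hwx : w x = t * ε := by
        simp only [hwdef, sub_self, hF0]
        norm_num
      rw [hxu, hwx] at hmax
      nlinarith
    · intro z hz
      have hzs : z ∈ Metric.sphere x r := Metric.frontier_ball_subset_sphere hz
      have hzD : z ∈ D := hrD (Metric.sphere_subset_closedBall hzs)
      by_cases hzF : -ε ≤ (F (z - x)).re
      · have hzA : z ∈ Aset := ⟨hzs, hzF⟩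
        have h1 : w z ≤ t * (Mb + ε) := by
          simp only [hwdef]
          apply mul_le_mul_of_nonneg_left _ ht.le
          have := hMb z hzs
          linarith
        have h2 : t * (Mb + ε) < m := by
          rw [htdef, div_mul_eq_mul_div, div_lt_iff₀ (by positivity)]
          nlinarith
        linarith [hmA z hzA]
      · push_neg at hzF
        have h1 : w z ≤ 0 := by
          simp only [hwdef]
          apply mul_nonpos_of_nonneg_of_nonpos ht.le
          linarith
        linarith [hu_nonneg z hzD]
end
end

section
/- Let μ be a Borel probability measure with compact support on a finite-dimensional real normed vector space E, and let x ∈ E satisfy L(x) = ∫ L dμ for every continuous linear functional L : E → ℝ (i.e., x is the barycenter of μ). Then x lies in the relative interior (intrinsic interior) of the convex hull of the support of μ. -/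
open MeasureTheory

noncomputable section

/-- The support of a Borel measure: the smallest closed set of full measure,
i.e. the set of points all of whose neighborhoods have positive measure. -/
def measureSupport {E : Type*} [TopologicalSpace E] [MeasurableSpace E]
    (μ : Measure E) : Set E :=
  {x | ∀ U ∈ nhds x, μ U ≠ 0}

/-- In a second-countable space, the complement of the support of a measure is null. -/
lemma measure_compl_measureSupport {X : Type*} [TopologicalSpace X]
    [SecondCountableTopology X] [MeasurableSpace X] (μ : Measure X) :
    μ (measureSupport μ)ᶜ = 0 := by
  classical
  set B := TopologicalSpace.countableBasis X with hBdef
  have hB := TopologicalSpace.isBasis_countableBasis X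
  have hcov : (measureSupport μ)ᶜ ⊆ ⋃₀ {U | U ∈ B ∧ μ U = 0} := by
    intro z hz
    simp only [measureSupport, Set.mem_compl_iff, Set.mem_setOf_eq, not_forall] at hz
    obtain ⟨U, hU, hU0⟩ := hz
    rw [not_not] at hU0
    obtain ⟨V, hVB, hzV, hVU⟩ := hB.mem_nhds_iff.mp hU
    exact ⟨V, ⟨hVB, measure_mono_null hVU hU0⟩, hzV⟩
  refine measure_mono_null hcov ?_
  refine (measure_sUnion_null_iff ?_).2 fun s hs => hs.2
  exact (TopologicalSpace.countable_countableBasis X).mono fun s hs => hs.1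

/-- Geometric key lemma: if the affine span of `T` is everything and every continuous
linear functional which is nonpositive on `T` vanishes on `T`, then `0` belongs to the
interior of the convex hull of `T`. -/
lemma zero_mem_interior_convexHull_of_forall
    {F : Type*} [NormedAddCommGroup F] [NormedSpace ℝ F] [FiniteDimensional ℝ F]
    {T : Set F} (hspan : affineSpan ℝ T = ⊤)
    (hforall : ∀ L : F →L[ℝ] ℝ, (∀ y ∈ T, L y ≤ 0) → ∀ y ∈ T, L y = 0) :
    (0 : F) ∈ interior (convexHull ℝ T) := by
  by_contra h0
  have hconv : Convex ℝ (convexHull ℝ T) := convex_convexHull ℝ T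
  have hne : (interior (convexHull ℝ T)).Nonempty := by
    rw [hconv.interior_nonempty_iff_affineSpan_eq_top, affineSpan_convexHull]
    exact hspan
  obtain ⟨L, hL⟩ := geometric_hahn_banach_open_point hconv.interior isOpen_interior h0
  have hL' : ∀ a ∈ interior (convexHull ℝ T), L a < 0 := by
    intro a ha
    have := hL a ha
    simpa using this
  obtain ⟨a₀, ha₀⟩ := hne
  have hle : ∀ y ∈ T, L y ≤ 0 := by
    intro y hy
    have key : ∀ t : ℝ, t ∈ Set.Ico (0 : ℝ) 1 → L ((1 - t) • a₀ + t • y) < 0 := by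
      intro t ht
      refine hL' _ ?_
      exact hconv.combo_interior_closure_mem_interior ha₀
        (subset_closure (subset_convexHull ℝ T hy)) (by linarith [ht.2]) ht.1 (by ring)
    have htend : Filter.Tendsto (fun t : ℝ => L ((1 - t) • a₀ + t • y))
        (nhdsWithin 1 (Set.Iio 1)) (nhds (L y)) := by
      have hc : Continuous (fun t : ℝ => L ((1 - t) • a₀ + t • y)) := by
        fun_prop
      have h1 := hc.tendsto 1
      simp only [sub_self, zero_smul, zero_add, one_smul] at h1
      exact h1.mono_left nhdsWithin_le_nhds
    refine le_of_tendsto htend ?_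
    filter_upwards [Ioo_mem_nhdsLT_of_mem (by norm_num : (1 : ℝ) ∈ Set.Ioc 0 1)] with t ht
    exact (key t ⟨ht.1.le, ht.2⟩).le
  have heq := hforall L hle
  have hsub : convexHull ℝ T ⊆ {w | L w = (0 : ℝ)} := by
    refine convexHull_min (fun y hy => heq y hy) ?_
    exact convex_hyperplane ⟨map_add L, map_smul L⟩ 0
  have h1 : L a₀ < 0 := hL' a₀ ha₀
  have h2 : L a₀ = 0 := hsub (interior_subset ha₀)
  linarith

/-- A point which is the barycenter of a compactly supported Borel probability
measure `μ` on a finite-dimensional real normed vector space lies in the relative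
(intrinsic) interior of the convex hull of the support of `μ`. -/
theorem barycenter_mem_intrinsicInterior_convexHull_support
    {E : Type*} [NormedAddCommGroup E] [NormedSpace ℝ E] [FiniteDimensional ℝ E]
    [MeasurableSpace E] [BorelSpace E]
    (μ : Measure E) [IsProbabilityMeasure μ] (hsupp : IsCompact (measureSupport μ))
    (x : E) (hbary : ∀ L : E →L[ℝ] ℝ, L x = ∫ w, L w ∂μ) :
    x ∈ intrinsicInterior ℝ (convexHull ℝ (measureSupport μ)) := by
  classical
  set S := measureSupport μ with hSdef
  have hnull : μ Sᶜ = 0 := measure_compl_measureSupport μ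
  have hae : ∀ᵐ w ∂μ, w ∈ S := by
    rw [ae_iff]
    simpa [Set.compl_def] using hnull
  have hSne : S.Nonempty := by
    by_contra h
    rw [Set.not_nonempty_iff_eq_empty] at h
    rw [h, Set.compl_empty] at hnull
    simp [measure_univ] at hnull
  obtain ⟨C, hC⟩ : ∃ C, ∀ y ∈ S, ‖y‖ ≤ C :=
    isBounded_iff_forall_norm_le.1 hsupp.isBounded
  have hint : Integrable (fun w : E => w) μ := by
    refine Integrable.mono' (integrable_const C) aestronglyMeasurable_id ?_
    exact hae.mono fun w hw => hC w hw
  -- `x` is the vector integral of the identity.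
  have hbar : x = ∫ w, w ∂μ := by
    by_contra hne
    obtain ⟨L, hLne⟩ := SeparatingDual.exists_separating_of_ne (R := ℝ) hne
    apply hLne
    rw [hbary L, ContinuousLinearMap.integral_comp_comm L hint]
  -- Key analytic fact: a functional maximized over `S` at `x` is constant on `S`.
  have keyA : ∀ L : E →L[ℝ] ℝ, (∀ y ∈ S, L y ≤ L x) → ∀ y ∈ S, L y = L x := by
    intro L hle y hy
    by_contra hne'
    have hlt : L y < L x := lt_of_le_of_ne (hle y hy) hne'
    have hintL : Integrable (fun w => L x - L w) μ :=
      (integrable_const (L x)).sub (L.integrable_comp hint)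
    have hzero : ∫ w, (L x - L w) ∂μ = 0 := by
      rw [integral_sub (integrable_const _) (L.integrable_comp hint), integral_const,
        probReal_univ, one_smul]
      have : ∫ w, L w ∂μ = L x := (hbary L).symm
      rw [this, sub_self]
    have hnonneg : 0 ≤ᵐ[μ] fun w => L x - L w :=
      hae.mono fun w hw => sub_nonneg.2 (hle w hw)
    have haeeq : (fun w => L x - L w) =ᵐ[μ] 0 :=
      (integral_eq_zero_iff_of_nonneg_ae hnonneg hintL).1 hzero
    have haeeq' : ∀ᵐ w ∂μ, L x - L w = 0 := by
      filter_upwards [haeeq] with w hw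
      simpa using hw
    have hμU : μ {w | L w < L x} = 0 := by
      refine measure_mono_null ?_ (ae_iff.1 haeeq')
      intro w hw
      simp only [Set.mem_setOf_eq] at hw ⊢
      intro hcontra
      have : L w = L x := by linarith
      exact absurd this (ne_of_lt hw)
    exact hy {w | L w < L x}
      (IsOpen.mem_nhds (isOpen_lt L.continuous continuous_const) hlt) hμU
  -- `x` lies in the closed convex hull, hence in the affine span of `S`.
  have hxK : x ∈ closure (convexHull ℝ S) := by
    rw [hbar]
    exact (convex_convexHull ℝ S).closure.integral_mem isClosed_closure
      (hae.mono fun w hw => subset_closure (subset_convexHull ℝ S hw)) hint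
  have hxspan : x ∈ affineSpan ℝ S := by
    have hclosed : IsClosed ((affineSpan ℝ S : Set E)) :=
      AffineSubspace.closed_of_finiteDimensional _
    exact closure_minimal (convexHull_subset_affineSpan S) hclosed hxK
  -- Pass to the direction of the affine span.
  set V : Submodule ℝ E := (affineSpan ℝ S).direction with hVdef
  have hmemV : ∀ y ∈ S, y - x ∈ V := fun y hy =>
    AffineSubspace.vsub_mem_direction (subset_affineSpan ℝ S hy) hxspan
  set T : Set V := {v : V | (v : E) + x ∈ S} with hTdef
  set φ : V →ᵃⁱ[ℝ] E :=
    ((AffineIsometryEquiv.constVAdd ℝ E x).toAffineIsometry).comp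
      V.subtypeₗᵢ.toAffineIsometry with hφdef
  have hφ : ∀ v : V, φ v = x + (v : E) := fun v => rfl
  have himg : φ '' T = S := by
    ext y
    constructor
    · rintro ⟨v, hv, rfl⟩
      rw [hφ v, add_comm]
      exact hv
    · intro hy
      refine ⟨⟨y - x, hmemV y hy⟩, ?_, ?_⟩
      · show ((⟨y - x, hmemV y hy⟩ : V) : E) + x ∈ S
        simpa [sub_add_cancel] using hy
      · rw [hφ]
        simp
  -- `T` spans `V` affinely.
  have hTne : T.Nonempty := by
    obtain ⟨y, hy⟩ := hSne
    exact ⟨⟨y - x, hmemV y hy⟩, by simpa [hTdef, sub_add_cancel] using hy⟩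
  have hcoeT : V.subtype '' (T -ᵥ T) = (S : Set E) -ᵥ S := by
    ext w
    constructor
    · rintro ⟨u, hu, rfl⟩
      obtain ⟨v₁, hv₁, v₂, hv₂, rfl⟩ := hu
      refine ⟨(v₁ : E) + x, hv₁, (v₂ : E) + x, hv₂, ?_⟩
      simp [vsub_eq_sub]
    · rintro ⟨y₁, hy₁, y₂, hy₂, rfl⟩
      refine ⟨(⟨y₁ - x, hmemV y₁ hy₁⟩ : V) -ᵥ (⟨y₂ - x, hmemV y₂ hy₂⟩ : V), ?_, ?_⟩
      · exact Set.vsub_mem_vsub (by simpa [hTdef, sub_add_cancel] using hy₁)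
          (by simpa [hTdef, sub_add_cancel] using hy₂)
      · simp [vsub_eq_sub]
  have hvs : vectorSpan ℝ T = (⊤ : Submodule ℝ V) := by
    apply Submodule.map_injective_of_injective V.injective_subtype
    rw [Submodule.map_subtype_top]
    rw [vectorSpan_def, Submodule.map_span, hcoeT, ← vectorSpan_def]
    exact (direction_affineSpan ℝ S).symm
  have hspanT : affineSpan ℝ T = ⊤ := by
    rw [AffineSubspace.affineSpan_eq_top_iff_vectorSpan_eq_top_of_nonempty ℝ _ _ hTne]
    exact hvs
  -- Functional condition on `T`.
  have hTcond : ∀ L : V →L[ℝ] ℝ, (∀ v ∈ T, L v ≤ 0) → ∀ v ∈ T, L v = 0 := by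
    intro L hle
    obtain ⟨g, hg, -⟩ := exists_extension_norm_eq V L
    have h1 : ∀ y ∈ S, g y ≤ g x := by
      intro y hy
      have hv : (⟨y - x, hmemV y hy⟩ : V) ∈ T := by
        show (((⟨y - x, hmemV y hy⟩ : V)) : E) + x ∈ S
        simpa [sub_add_cancel] using hy
      have h2 := hle _ hv
      rw [← hg] at h2
      simp only [map_sub] at h2
      linarith
    have h2 := keyA g h1
    intro v hv
    have hy : (v : E) + x ∈ S := hv
    have h3 : g ((v : E) + x) = g x := h2 _ hy
    rw [map_add] at h3
    have h4 : g (v : E) = 0 := by linarith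
    rw [← hg v]
    exact h4
  have h0 : (0 : V) ∈ interior (convexHull ℝ T) :=
    zero_mem_interior_convexHull_of_forall hspanT hTcond
  have h0' : (0 : V) ∈ intrinsicInterior ℝ (convexHull ℝ T) :=
    interior_subset_intrinsicInterior h0
  -- Transfer back along the affine isometry `φ`.
  have hhull : convexHull ℝ S = ⇑φ '' convexHull ℝ T := by
    have h5 := (φ.toAffineMap.image_convexHull T).symm
    rw [φ.coe_toAffineMap] at h5
    rw [← himg, h5]
  rw [hhull, AffineIsometry.image_intrinsicInterior]
  exact ⟨0, h0', by simp [hφ]⟩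
end
end

section
/- Let n ≥ 1, r > 0, and let P̄ = {z ∈ ℂⁿ : |z_i| ≤ r for all i} be the closed polydisk of radius r. For z ∈ P̄ and k ∈ {0, 1, …, n}, the point z is a complex k-extreme point of P̄ if and only if the number of indices i with |z_i| < r equals k. -/
noncomputable section

/-- `C` is a complex `m`-dimensional convex set: a convex set whose real affine hull
is a translate of a complex linear subspace of complex dimension `m`. -/
def IsComplexConvexDim {E : Type*} [NormedAddCommGroup E] [NormedSpace ℂ E]
    (m : ℕ) (C : Set E) : Prop :=
  Convex ℝ C ∧ ∃ (p : E) (V : Submodule ℂ E), Module.finrank ℂ V = m ∧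
    (affineSpan ℝ C : Set E) = (p + ·) '' (V : Set E)

/-- `z` is a complex `k`-extreme point of the convex set `C`: it lies in the relative
interior of a complex `k`-dimensional convex subset of `C`, but not in the relative
interior of any complex `(k+1)`-dimensional convex subset of `C`. -/
def IsComplexKExtremePoint {E : Type*} [NormedAddCommGroup E] [NormedSpace ℂ E]
    (k : ℕ) (C : Set E) (z : E) : Prop :=
  (∃ S : Set E, S ⊆ C ∧ IsComplexConvexDim k S ∧ z ∈ intrinsicInterior ℝ S) ∧
  ¬ ∃ S : Set E, S ⊆ C ∧ IsComplexConvexDim (k + 1) S ∧ z ∈ intrinsicInterior ℝ S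

namespace PolydiskExtremeAux

open Module

variable {n : ℕ}

lemma coord_norm_le (v : EuclideanSpace ℂ (Fin n)) (i : Fin n) : ‖v i‖ ≤ ‖v‖ := by
  rw [EuclideanSpace.norm_eq]
  exact Real.le_sqrt_of_sq_le
    (Finset.single_le_sum (fun j _ => sq_nonneg ‖v j‖) (Finset.mem_univ i))

/-- A metric characterization extracted from membership in the intrinsic interior. -/
lemma intrinsic_metric {S : Set (EuclideanSpace ℂ (Fin n))} {z : EuclideanSpace ℂ (Fin n)}
    (h : z ∈ intrinsicInterior ℝ S) :
    ∃ ε > 0, ∀ w : EuclideanSpace ℂ (Fin n),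
      w ∈ (affineSpan ℝ S : Set (EuclideanSpace ℂ (Fin n))) → dist w z < ε → w ∈ S := by
  obtain ⟨y, hy, rfl⟩ := mem_intrinsicInterior.mp h
  rw [mem_interior_iff_mem_nhds, Metric.mem_nhds_iff] at hy
  obtain ⟨ε, hε, hball⟩ := hy
  refine ⟨ε, hε, fun w hw hdist => ?_⟩
  have : (⟨w, hw⟩ : affineSpan ℝ S) ∈ Metric.ball y ε := by
    rw [Metric.mem_ball, Subtype.dist_eq]
    exact hdist
  exact hball this

/-- The embedding of `↥J → ℂ` into `Fin n → ℂ`, extending by zero. -/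
def phi0 (J : Finset (Fin n)) : (↥J → ℂ) →ₗ[ℂ] (Fin n → ℂ) :=
  LinearMap.pi (fun i : Fin n => if h : i ∈ J then LinearMap.proj (⟨i, h⟩ : ↥J) else 0)

/-- The embedding of `↥J → ℂ` into `EuclideanSpace ℂ (Fin n)`, extending by zero. -/
def phi (J : Finset (Fin n)) : (↥J → ℂ) →ₗ[ℂ] EuclideanSpace ℂ (Fin n) :=
  (WithLp.linearEquiv 2 ℂ (Fin n → ℂ)).symm.toLinearMap ∘ₗ phi0 J

lemma phi_apply (J : Finset (Fin n)) (f : ↥J → ℂ) (i : Fin n) :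
    phi J f i = if h : i ∈ J then f ⟨i, h⟩ else 0 := by
  by_cases h : i ∈ J <;> simp [phi, phi0, h]

lemma phi_inj (J : Finset (Fin n)) : Function.Injective (phi J) := by
  intro f g hfg
  funext j
  have := congrFun (congrArg (fun w : EuclideanSpace ℂ (Fin n) => (w : Fin n → ℂ)) hfg) j.1
  simpa [phi_apply, j.2] using this

lemma mem_range_phi (J : Finset (Fin n)) (w : EuclideanSpace ℂ (Fin n)) :
    w ∈ LinearMap.range (phi J) ↔ ∀ i ∉ J, w i = 0 := by
  constructor
  · rintro ⟨f, rfl⟩ i hi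
    rw [phi_apply, dif_neg hi]
  · intro h
    refine ⟨fun j => w j.1, PiLp.ext fun i => ?_⟩
    rw [phi_apply]
    by_cases hi : i ∈ J
    · rw [dif_pos hi]
    · rw [dif_neg hi, h i hi]

/-- Construction of a complex `J.card`-dimensional convex subset of the polydisk having
`z` in its intrinsic interior, for any finite set `J` of coordinates where `‖z i‖ < r`. -/
lemma polydisk_construct (r : ℝ) (z : EuclideanSpace ℂ (Fin n))
    (hz : ∀ i, ‖z i‖ ≤ r) (J : Finset (Fin n)) (hJ : ∀ i ∈ J, ‖z i‖ < r) :
    ∃ S : Set (EuclideanSpace ℂ (Fin n)), S ⊆ {w | ∀ i, ‖w i‖ ≤ r} ∧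
      IsComplexConvexDim J.card S ∧ z ∈ intrinsicInterior ℝ S := by
  classical
  set S : Set (EuclideanSpace ℂ (Fin n)) :=
    {w | (∀ i ∉ J, w i = z i) ∧ ∀ i ∈ J, ‖w i‖ ≤ r} with hSdef
  set V : Submodule ℂ (EuclideanSpace ℂ (Fin n)) := LinearMap.range (phi J) with hVdef
  have hzS : z ∈ S := ⟨fun i _ => rfl, fun i _ => hz i⟩
  have hSsub : S ⊆ {w | ∀ i, ‖w i‖ ≤ r} := by
    intro w hw i
    by_cases hi : i ∈ J
    · exact hw.2 i hi
    · rw [hw.1 i hi]; exact hz i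
  -- convexity
  have hconv : Convex ℝ S := by
    intro x hx y hy a b ha hb hab
    have happ : ∀ i, (a • x + b • y) i = a • x i + b • y i := fun i => rfl
    constructor
    · intro i hi
      rw [happ, hx.1 i hi, hy.1 i hi, ← add_smul, hab, one_smul]
    · intro i hi
      rw [happ]
      calc ‖a • x i + b • y i‖ ≤ ‖a • x i‖ + ‖b • y i‖ := norm_add_le _ _
        _ = a * ‖x i‖ + b * ‖y i‖ := by
            rw [norm_smul, norm_smul, Real.norm_of_nonneg ha, Real.norm_of_nonneg hb]
        _ ≤ a * r + b * r := by
            gcongr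
            · exact hx.2 i hi
            · exact hy.2 i hi
        _ = r := by rw [← add_mul, hab, one_mul]
  -- affine span equals z + V
  have hSA : ∀ w ∈ S, w - z ∈ V := by
    intro w hw
    rw [hVdef, mem_range_phi]
    intro i hi
    show w i - z i = 0
    rw [hw.1 i hi, sub_self]
  have himg : ∀ w ∈ (z + ·) '' (V : Set (EuclideanSpace ℂ (Fin n))),
      ∀ i ∉ J, w i = z i := by
    rintro w ⟨v, hv, rfl⟩ i hi
    have hvi : v i = 0 := (mem_range_phi J v).mp hv i hi
    show z i + v i = z i
    rw [hvi, add_zero]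
  have hspan : (affineSpan ℝ S : Set (EuclideanSpace ℂ (Fin n)))
      = (z + ·) '' (V : Set (EuclideanSpace ℂ (Fin n))) := by
    apply Set.Subset.antisymm
    · have hle : affineSpan ℝ S ≤ AffineSubspace.mk' z (V.restrictScalars ℝ) := by
        rw [affineSpan_le]
        intro w hw
        rw [SetLike.mem_coe, AffineSubspace.mem_mk']
        exact hSA w hw
      intro w hw
      have := hle hw
      rw [AffineSubspace.mem_mk'] at this
      exact ⟨w - z, this, by show z + (w - z) = w; rw [add_sub_cancel]⟩
    · rintro w ⟨v, hv, rfl⟩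
      -- show `z + v ∈ affineSpan ℝ S`
      obtain ⟨ε, hε, hεJ⟩ : ∃ ε > 0, ∀ i ∈ J, ‖z i‖ + ε ≤ r := by
        rcases J.eq_empty_or_nonempty with h | h
        · exact ⟨1, one_pos, by simp [h]⟩
        · refine ⟨J.inf' h (fun i => r - ‖z i‖), ?_, ?_⟩
          · show (0:ℝ) < _
            rw [Finset.lt_inf'_iff]
            intro i hi
            linarith [hJ i hi]
          · intro i hi
            have := Finset.inf'_le (fun i => r - ‖z i‖) hi
            linarith
      set δ : ℝ := ε / (‖v‖ + 1) with hδ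
      have hδpos : 0 < δ := by positivity
      have hmem : z + δ • v ∈ S := by
        constructor
        · intro i hi
          have hvi : v i = 0 := (mem_range_phi J v).mp hv i hi
          show z i + δ • v i = z i
          rw [hvi, smul_zero, add_zero]
        · intro i hi
          have h1 : ‖v i‖ ≤ ‖v‖ := coord_norm_le v i
          have e : (z + δ • v) i = z i + δ • v i := rfl
          rw [e]
          have h2 : δ * ‖v i‖ ≤ ε := by
            calc δ * ‖v i‖ ≤ δ * (‖v‖ + 1) := by
                  have : (0:ℝ) ≤ δ := hδpos.le
                  nlinarith
              _ = ε := by rw [hδ]; field_simp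
          calc ‖z i + δ • v i‖ ≤ ‖z i‖ + ‖δ • v i‖ := norm_add_le _ _
            _ = ‖z i‖ + δ * ‖v i‖ := by rw [norm_smul, Real.norm_of_nonneg hδpos.le]
            _ ≤ ‖z i‖ + ε := by linarith
            _ ≤ r := hεJ i hi
      have hz' : z ∈ affineSpan ℝ S := subset_affineSpan ℝ S hzS
      have hm : z + δ • v ∈ affineSpan ℝ S := subset_affineSpan ℝ S hmem
      have h3 := AffineSubspace.smul_vsub_vadd_mem (affineSpan ℝ S) δ⁻¹ hm hz' hz'
      have e : δ⁻¹ • ((z + δ • v) -ᵥ z) +ᵥ z = z + v := by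
        rw [vsub_eq_sub, vadd_eq_add, add_sub_cancel_left, smul_smul,
          inv_mul_cancel₀ hδpos.ne', one_smul, add_comm]
      rwa [e] at h3
  refine ⟨S, hSsub, ⟨hconv, z, V, ?_, hspan⟩, ?_⟩
  · rw [hVdef, LinearMap.finrank_range_of_inj (phi_inj J), Module.finrank_pi, Fintype.card_coe]
  · -- intrinsic interior
    have hzspan : z ∈ affineSpan ℝ S := subset_affineSpan ℝ S hzS
    rw [mem_intrinsicInterior]
    refine ⟨⟨z, hzspan⟩, ?_, rfl⟩
    set U : Set (EuclideanSpace ℂ (Fin n)) := {w | ∀ i ∈ J, ‖w i‖ < r} with hU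
    have hUopen : IsOpen U := by
      have : U = ⋂ i ∈ J, {w : EuclideanSpace ℂ (Fin n) | ‖w i‖ < r} := by
        ext w; simp [hU]
      rw [this]
      refine isOpen_biInter_finset fun i _ => ?_
      exact isOpen_lt ((EuclideanSpace.proj i).continuous.norm) continuous_const
    have hsub : (Subtype.val ⁻¹' U : Set (affineSpan ℝ S)) ⊆ Subtype.val ⁻¹' S := by
      rintro ⟨x, hx⟩ hxU
      have hx' : x ∈ (z + ·) '' (V : Set (EuclideanSpace ℂ (Fin n))) := by
        rw [← hspan]; exact hx
      exact ⟨himg x hx', fun i hi => (hxU i hi).le⟩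
    refine interior_maximal hsub (hUopen.preimage continuous_subtype_val) ?_
    exact fun i hi => hJ i hi

/-- Upper bound: any complex `d`-dimensional convex subset of the polydisk having `z` in
its intrinsic interior satisfies `d ≤ #{i : ‖z i‖ < r}`. -/
lemma polydisk_bound (r : ℝ) (z : EuclideanSpace ℂ (Fin n))
    (hz : ∀ i, ‖z i‖ ≤ r) {S : Set (EuclideanSpace ℂ (Fin n))} {d : ℕ}
    (hSsub : S ⊆ {w | ∀ i, ‖w i‖ ≤ r}) (hdim : IsComplexConvexDim d S)
    (hzint : z ∈ intrinsicInterior ℝ S) :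
    d ≤ (Finset.univ.filter fun i => ‖z i‖ < r).card := by
  classical
  obtain ⟨-, p, V, hrank, hspan⟩ := hdim
  obtain ⟨ε, hε, hball⟩ := intrinsic_metric hzint
  have hzspan : z ∈ (affineSpan ℝ S : Set (EuclideanSpace ℂ (Fin n))) :=
    subset_affineSpan ℝ S (intrinsicInterior_subset hzint)
  rw [hspan] at hzspan
  obtain ⟨v0, hv0, hzv0'⟩ := hzspan
  have hzv0 : p + v0 = z := hzv0'
  have key : ∀ v ∈ V, ∀ i, ¬ ‖z i‖ < r → v i = 0 := by
    intro v hv i hi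
    have hzi : ‖z i‖ = r := le_antisymm (hz i) (not_lt.mp hi)
    set c : ℝ := ε / (2 * (‖v‖ + 1)) with hc
    have hcpos : 0 < c := by positivity
    have hnorm : ‖c • v‖ < ε := by
      rw [norm_smul, Real.norm_of_nonneg hcpos.le]
      calc c * ‖v‖ ≤ c * (‖v‖ + 1) := by
            have : (0:ℝ) ≤ c := hcpos.le
            nlinarith [norm_nonneg v]
        _ = ε / 2 := by rw [hc]; field_simp
        _ < ε := by linarith
    have hmem : ∀ s : ℝ, ‖s • v‖ < ε → z + s • v ∈ S := by
      intro s hs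
      apply hball
      · rw [hspan]
        exact ⟨v0 + s • v, V.add_mem hv0 (V.smul_of_tower_mem s hv),
          by show p + (v0 + s • v) = z + s • v; rw [← add_assoc, hzv0]⟩
      · rw [dist_eq_norm, add_sub_cancel_left]
        exact hs
    have h₁ : ‖z i + c • v i‖ ≤ r := by
      have := hSsub (hmem c hnorm) i
      simpa using this
    have h₂ : ‖z i - c • v i‖ ≤ r := by
      have hneg : ‖(-c) • v‖ < ε := by rwa [neg_smul, norm_neg]
      have := hSsub (hmem (-c) hneg) i
      have e : (z + (-c) • v) i = z i - c • v i := by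
        show z i + (-c) • v i = z i - c • v i
        rw [neg_smul, ← sub_eq_add_neg]
      rwa [e] at this
    have hpar := parallelogram_law_with_norm ℂ (z i) (c • v i)
    have hb : ‖c • v i‖ = 0 := by
      nlinarith [norm_nonneg (c • v i), norm_nonneg (z i + c • v i), norm_nonneg (z i - c • v i)]
    rcases smul_eq_zero.mp (norm_eq_zero.mp hb) with h | h
    · exact absurd h hcpos.ne'
    · exact h
  set I := Finset.univ.filter fun i : Fin n => ‖z i‖ < r with hI
  let f : V →ₗ[ℂ] (↥I → ℂ) :=
  { toFun := fun v j => (v : EuclideanSpace ℂ (Fin n)) j.1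
    map_add' := fun x y => rfl
    map_smul' := fun c x => rfl }
  have hf : Function.Injective f := by
    intro x y hxy
    apply Subtype.val_injective
    refine PiLp.ext fun i => ?_
    by_cases hi : ‖z i‖ < r
    · have hiI : i ∈ I := Finset.mem_filter.mpr ⟨Finset.mem_univ i, hi⟩
      exact congrFun hxy ⟨i, hiI⟩
    · rw [key x.1 x.2 i hi, key y.1 y.2 i hi]
  calc d = finrank ℂ V := hrank.symm
    _ ≤ finrank ℂ (↥I → ℂ) := LinearMap.finrank_le_finrank_of_injective hf
    _ = I.card := by rw [Module.finrank_pi, Fintype.card_coe]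

end PolydiskExtremeAux

open PolydiskExtremeAux in
/-- A point `z` of the closed polydisk of radius `r` in `ℂⁿ` is a complex `k`-extreme
point of the polydisk iff exactly `k` of its coordinates satisfy `|z i| < r`. -/
theorem polydisk_complex_extreme_points {n : ℕ} (hn : 1 ≤ n) (r : ℝ) (hr : 0 < r)
    (z : EuclideanSpace ℂ (Fin n)) (hz : ∀ i, ‖z i‖ ≤ r) (k : ℕ) (hk : k ≤ n) :
    IsComplexKExtremePoint k {w : EuclideanSpace ℂ (Fin n) | ∀ i, ‖w i‖ ≤ r} z ↔
      (Finset.univ.filter fun i => ‖z i‖ < r).card = k := by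
  classical
  set I := Finset.univ.filter fun i : Fin n => ‖z i‖ < r with hI
  have hmemI : ∀ i ∈ I, ‖z i‖ < r := fun i hi => (Finset.mem_filter.mp hi).2
  constructor
  · rintro ⟨⟨S, hS, hdim, hzS⟩, hneg⟩
    have h1 : k ≤ I.card := hI ▸ polydisk_bound r z hz hS hdim hzS
    by_contra hne
    have h2 : k + 1 ≤ I.card := lt_of_le_of_ne h1 (fun h => hne h.symm)
    obtain ⟨J, hJI, hJcard⟩ := Finset.exists_subset_card_eq h2
    obtain ⟨S', h1', h2', h3'⟩ := polydisk_construct r z hz J (fun i hi => hmemI i (hJI hi))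
    exact hneg ⟨S', h1', hJcard ▸ h2', h3'⟩
  · intro hcard
    constructor
    · obtain ⟨S, h1, h2, h3⟩ := polydisk_construct r z hz I hmemI
      exact ⟨S, h1, hcard ▸ h2, h3⟩
    · rintro ⟨S, hS, hdim, hzS⟩
      have := polydisk_bound r z hz hS hdim hzS
      rw [← hI] at this
      omega
end
end
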